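/- For every real number y, (1/Re_m)·B1''(y) + u1'(y) = 0. That is, the Hartmann profiles satisfy the stationary induction (Faraday) equation −(1/Re_m)·B1''(y) − u1'(y)·B0 = 0 with applied transverse field B0 = 1; the proof uses the identity Ha² = Re·Re_m. -/

import Mathlib

open Real

private lemma sinh_mul_hasDeriv (Ha y : ℝ) :
    HasDerivAt (fun y : ℝ => Real.sinh (y * Ha)) (Real.cosh (y * Ha) * Ha) y := by
  have h := (Real.hasDerivAt_sinh (y * Ha)).comp y ((hasDerivAt_id y).mul_const Ha)
  simpa [Function.comp_def] using h

private lemma cosh_mul_hasDeriv (Ha y : ℝ) :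
    HasDerivAt (fun y : ℝ => Real.cosh (y * Ha)) (Real.sinh (y * Ha) * Ha) y := by
  have h := (Real.hasDerivAt_cosh (y * Ha)).comp y ((hasDerivAt_id y).mul_const Ha)
  simpa [Function.comp_def] using h

/-- Hartmann flow: the profiles satisfy the stationary induction (Faraday)
equation `(1/Re_m)·B1''(y) + u1'(y) = 0`. -/
theorem hartmann_induction_balance
    (Re Rem : ℝ) (hRe : 0 < Re) (hRem : 0 < Rem)
    (Ha : ℝ) (hHa : Ha = Real.sqrt (Re * Rem)) (hHapos : 0 < Ha)
    (G : ℝ) (hG : G = 2 * Ha * Real.sinh (Ha / 2) / (Re * (Real.cosh (Ha / 2) - 1)))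
    (u1 B1 : ℝ → ℝ)
    (hu1 : ∀ y : ℝ, u1 y =
      (G * Re / (2 * Ha * Real.tanh (Ha / 2))) * (1 - Real.cosh (y * Ha) / Real.cosh (Ha / 2)))
    (hB1 : ∀ y : ℝ, B1 y = (G / 2) * (Real.sinh (y * Ha) / Real.sinh (Ha / 2) - 2 * y)) :
    ∀ y : ℝ, (1 / Rem) * deriv (deriv B1) y + deriv u1 y = 0 := by
  have hB1f : B1 = fun y => (G / 2) * (Real.sinh (y * Ha) / Real.sinh (Ha / 2) - 2 * y) :=
    funext hB1
  have hu1f : u1 = fun y =>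
      (G * Re / (2 * Ha * Real.tanh (Ha / 2))) * (1 - Real.cosh (y * Ha) / Real.cosh (Ha / 2)) :=
    funext hu1
  have hsinh : Real.sinh (Ha / 2) ≠ 0 := by
    have : 0 < Real.sinh (Ha / 2) := Real.sinh_pos_iff.mpr (by linarith)
    linarith
  have hcosh : Real.cosh (Ha / 2) ≠ 0 := (Real.cosh_pos (x := Ha / 2)).ne'
  have htanh : Real.tanh (Ha / 2) ≠ 0 := by
    rw [Real.tanh_eq_sinh_div_cosh]
    exact div_ne_zero hsinh hcosh
  have hHa2 : Ha ^ 2 = Re * Rem := by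
    rw [hHa, Real.sq_sqrt (by positivity)]
  have hB1' : deriv B1 = fun y =>
      (G / 2) * (Real.cosh (y * Ha) * Ha / Real.sinh (Ha / 2) - 2) := by
    funext y
    rw [hB1f]
    exact HasDerivAt.deriv (by
      have := (((sinh_mul_hasDeriv Ha y).div_const (Real.sinh (Ha / 2))).sub
        ((hasDerivAt_id y).const_mul 2)).const_mul (G / 2)
      simpa using this)
  have hB1'' : deriv (deriv B1) =
      fun y => (G / 2) * (Real.sinh (y * Ha) * Ha * Ha / Real.sinh (Ha / 2)) := by
    funext y
    rw [hB1']
    exact HasDerivAt.deriv (by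
      have := ((((cosh_mul_hasDeriv Ha y).mul_const Ha).div_const
        (Real.sinh (Ha / 2))).sub_const 2).const_mul (G / 2)
      simpa [mul_comm, mul_assoc, mul_left_comm] using this)
  have hu1' : deriv u1 = fun y =>
      (G * Re / (2 * Ha * Real.tanh (Ha / 2))) *
        (-(Real.sinh (y * Ha) * Ha / Real.cosh (Ha / 2))) := by
    funext y
    rw [hu1f]
    exact HasDerivAt.deriv (by
      have := ((hasDerivAt_const y (1:ℝ)).sub
        ((cosh_mul_hasDeriv Ha y).div_const (Real.cosh (Ha / 2)))).const_mul
        (G * Re / (2 * Ha * Real.tanh (Ha / 2)))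
      simpa using this)
  intro y
  rw [hB1'', hu1', Real.tanh_eq_sinh_div_cosh]
  have hHane : Ha ≠ 0 := hHapos.ne'
  have hRemne : Rem ≠ 0 := hRem.ne'
  field_simp
  linear_combination (G * Real.sinh (y * Ha)) * hHa2
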